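/- If η_0 > 0 and φ(η_0, 0·𝟙) = E[e^{η_0 M}] < ∞, then φ(η_0, (η_0/(k−1))𝟙) < ∞. -/

import Mathlib

open Filter Topology
open scoped ENNReal

noncomputable section

/-- Traffic intensity ρ = λ / Σ μᵢ. -/
def rho (k : ℕ) (lam : ℝ) (μ : Fin k → ℝ) : ℝ := lam / ∑ i, μ i

/-- Index set of the shortest queues: the zero coordinates of the difference vector. -/
def zeroSet (k : ℕ) (y : Fin k → ℕ) : Finset (Fin k) :=
  Finset.univ.filter (fun i => y i = 0)

/-- One-step transition probability of the uniformized JSQ chain `Z = (M, Y)` on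
`ℕ × (Fin k → ℕ)`, where `M` is the minimum queue length and `Y` the vector of
differences from the minimum. -/
def jsqP (k : ℕ) (lam : ℝ) (μ : Fin k → ℝ) (s s' : ℕ × (Fin k → ℕ)) : ℝ :=
  (if (zeroSet k s.2).card = 1 then
      (if s' = (s.1 + 1, fun j => s.2 j - 1) then lam else 0)
    else
      ∑ i ∈ zeroSet k s.2,
        (if s' = (s.1, Function.update s.2 i 1) then lam / (zeroSet k s.2).card else 0))
  + (∑ j ∈ (zeroSet k s.2)ᶜ,
      (if s' = (s.1, Function.update s.2 j (s.2 j - 1)) then μ j else 0))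
  + (∑ i ∈ zeroSet k s.2,
      (if s' = (if s.1 = 0 then s else (s.1 - 1, fun j => if j = i then 0 else s.2 j + 1))
        then μ i else 0))

/-- The exponential weight `e^{θ·Z}` for `θ ∈ ℝ^{k+1}` and a state `Z = (m, y)`. -/
def expWeight (k : ℕ) (θ : Fin (k + 1) → ℝ) (s : ℕ × (Fin k → ℕ)) : ℝ :=
  Real.exp (θ 0 * (s.1 : ℝ) + ∑ i : Fin k, θ i.succ * (s.2 i : ℝ))

/-- The stationary moment generating function `φ(θ) = E[e^{θ·Z}] ∈ [0,∞]`. -/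
def phi (k : ℕ) (π : ℕ × (Fin k → ℕ) → ℝ) (θ : Fin (k + 1) → ℝ) : ℝ≥0∞ :=
  ∑' s : ℕ × (Fin k → ℕ), ENNReal.ofReal (π s * expWeight k θ s)

/-- `φ_{+U}(θ) = E[e^{θ·Z} 1(Z ∈ S_{+U})]`. -/
def phiPlus (k : ℕ) (π : ℕ × (Fin k → ℕ) → ℝ) (U : Finset (Fin k))
    (θ : Fin (k + 1) → ℝ) : ℝ≥0∞ :=
  ∑' s : ℕ × (Fin k → ℕ),
    if 1 ≤ s.1 ∧ zeroSet k s.2 = U then ENNReal.ofReal (π s * expWeight k θ s) else 0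

/-- `φ_{0U}(θ) = E[e^{θ·Z} 1(Z ∈ S_{0U})]`. -/
def phiZero (k : ℕ) (π : ℕ × (Fin k → ℕ) → ℝ) (U : Finset (Fin k))
    (θ : Fin (k + 1) → ℝ) : ℝ≥0∞ :=
  ∑' s : ℕ × (Fin k → ℕ),
    if s.1 = 0 ∧ zeroSet k s.2 = U then ENNReal.ofReal (π s * expWeight k θ s) else 0

/-- The mgf `γ_{+U}(θ)` of the one-step increment from states in `S_{+U}`. -/
def gammaPlus (k : ℕ) (lam : ℝ) (μ : Fin k → ℝ) (U : Finset (Fin k))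
    (θ : Fin (k + 1) → ℝ) : ℝ :=
  (if U.card = 1 then lam * Real.exp (θ 0 - ∑ j ∈ Uᶜ, θ j.succ)
    else ∑ i ∈ U, (lam / U.card) * Real.exp (θ i.succ))
  + ∑ j ∈ Uᶜ, μ j * Real.exp (-θ j.succ)
  + ∑ i ∈ U, μ i * Real.exp (-θ 0 + ∑ j ∈ Finset.univ.erase i, θ j.succ)

/-- The mgf `γ_{0U}(θ)` of the one-step increment from states in `S_{0U}`. -/
def gammaZero (k : ℕ) (lam : ℝ) (μ : Fin k → ℝ) (U : Finset (Fin k))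
    (θ : Fin (k + 1) → ℝ) : ℝ :=
  (if U.card = 1 then lam * Real.exp (θ 0 - ∑ j ∈ Uᶜ, θ j.succ)
    else ∑ i ∈ U, (lam / U.card) * Real.exp (θ i.succ))
  + ∑ j ∈ Uᶜ, μ j * Real.exp (-θ j.succ)
  + ∑ i ∈ U, μ i

end


noncomputable section JSQaux
open Finset
namespace JSQ

variable {k : ℕ}

abbrev St (k : ℕ) := ℕ × (Fin k → ℕ)

lemma mem_zeroSet {y : Fin k → ℕ} {i : Fin k} : i ∈ zeroSet k y ↔ y i = 0 := by
  simp [zeroSet]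

/-- label sum (ENNReal version of one-step expectation). -/
def labelSum (lam : ℝ) (μ : Fin k → ℝ) (s : St k) (F : St k → ℝ≥0∞) : ℝ≥0∞ :=
  (if (zeroSet k s.2).card = 1 then ENNReal.ofReal lam * F (s.1 + 1, fun j => s.2 j - 1)
   else ∑ i ∈ zeroSet k s.2,
     ENNReal.ofReal (lam / (zeroSet k s.2).card) * F (s.1, Function.update s.2 i 1))
  + ∑ j ∈ (zeroSet k s.2)ᶜ, ENNReal.ofReal (μ j) * F (s.1, Function.update s.2 j (s.2 j - 1))
  + ∑ i ∈ zeroSet k s.2, ENNReal.ofReal (μ i) *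
      F (if s.1 = 0 then s else (s.1 - 1, fun j => if j = i then 0 else s.2 j + 1))

/-- label sum (real version). -/
def labelSumR (lam : ℝ) (μ : Fin k → ℝ) (s : St k) (f : St k → ℝ) : ℝ :=
  (if (zeroSet k s.2).card = 1 then lam * f (s.1 + 1, fun j => s.2 j - 1)
   else ∑ i ∈ zeroSet k s.2,
     lam / (zeroSet k s.2).card * f (s.1, Function.update s.2 i 1))
  + ∑ j ∈ (zeroSet k s.2)ᶜ, μ j * f (s.1, Function.update s.2 j (s.2 j - 1))
  + ∑ i ∈ zeroSet k s.2, μ i *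
      f (if s.1 = 0 then s else (s.1 - 1, fun j => if j = i then 0 else s.2 j + 1))

lemma tsum_ite_mul (c : St k) (r : ℝ) (F : St k → ℝ≥0∞) :
    ∑' s' : St k, ENNReal.ofReal (if s' = c then r else 0) * F s' = ENNReal.ofReal r * F c := by
  rw [tsum_eq_single c]
  · simp
  · intro b hb; simp [hb]

lemma tsum_ofReal_add_mul (g h : St k → ℝ) (hg : ∀ x, 0 ≤ g x) (hh : ∀ x, 0 ≤ h x)
    (F : St k → ℝ≥0∞) :
    ∑' x : St k, ENNReal.ofReal (g x + h x) * F x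
      = (∑' x : St k, ENNReal.ofReal (g x) * F x) + ∑' x : St k, ENNReal.ofReal (h x) * F x := by
  rw [← ENNReal.tsum_add]
  exact tsum_congr fun x => by rw [ENNReal.ofReal_add (hg x) (hh x), add_mul]

lemma tsum_ofReal_finsum_mul {ι : Type*} (T : Finset ι) (g : ι → St k → ℝ)
    (hg : ∀ i x, 0 ≤ g i x) (F : St k → ℝ≥0∞) :
    ∑' x : St k, ENNReal.ofReal (∑ i ∈ T, g i x) * F x
      = ∑ i ∈ T, ∑' x : St k, ENNReal.ofReal (g i x) * F x := by
  rw [← Summable.tsum_finsetSum (fun i _ => ENNReal.summable)]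
  exact tsum_congr fun x => by
    rw [ENNReal.ofReal_sum_of_nonneg (fun i _ => hg i x), Finset.sum_mul]

def chunk1 (lam : ℝ) (s s' : St k) : ℝ :=
  if (zeroSet k s.2).card = 1 then
    (if s' = (s.1 + 1, fun j => s.2 j - 1) then lam else 0)
  else
    ∑ i ∈ zeroSet k s.2,
      (if s' = (s.1, Function.update s.2 i 1) then lam / (zeroSet k s.2).card else 0)

def chunk2 (μ : Fin k → ℝ) (s s' : St k) : ℝ :=
  ∑ j ∈ (zeroSet k s.2)ᶜ, (if s' = (s.1, Function.update s.2 j (s.2 j - 1)) then μ j else 0)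

def chunk3 (μ : Fin k → ℝ) (s s' : St k) : ℝ :=
  ∑ i ∈ zeroSet k s.2,
    (if s' = (if s.1 = 0 then s else (s.1 - 1, fun j => if j = i then 0 else s.2 j + 1))
      then μ i else 0)

lemma jsqP_eq (lam : ℝ) (μ : Fin k → ℝ) (s s' : St k) :
    jsqP k lam μ s s' = chunk1 lam s s' + chunk2 μ s s' + chunk3 μ s s' := rfl

lemma chunk1_nonneg {lam : ℝ} (hlam : 0 ≤ lam) (s s' : St k) : 0 ≤ chunk1 lam s s' := by
  unfold chunk1
  by_cases h : (zeroSet k s.2).card = 1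
  · rw [if_pos h]; split_ifs
    · exact hlam
    · exact le_rfl
  · rw [if_neg h]
    refine Finset.sum_nonneg fun i _ => ?_
    split_ifs
    · positivity
    · exact le_rfl

lemma chunk2_nonneg {μ : Fin k → ℝ} (hμ : ∀ i, 0 ≤ μ i) (s s' : St k) : 0 ≤ chunk2 μ s s' := by
  refine Finset.sum_nonneg fun j _ => ?_
  split_ifs <;> simp [hμ j]

lemma chunk3_nonneg {μ : Fin k → ℝ} (hμ : ∀ i, 0 ≤ μ i) (s s' : St k) : 0 ≤ chunk3 μ s s' := by
  refine Finset.sum_nonneg fun i _ => ?_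
  split_ifs <;> simp [hμ i]

lemma tsum_pointmass {ι : Type*} (T : Finset ι) (tg : ι → St k) (r : ι → ℝ)
    (hr : ∀ i, 0 ≤ r i) (F : St k → ℝ≥0∞) :
    ∑' s' : St k, ENNReal.ofReal (∑ i ∈ T, if s' = tg i then r i else 0) * F s'
      = ∑ i ∈ T, ENNReal.ofReal (r i) * F (tg i) := by
  rw [tsum_ofReal_finsum_mul T (fun i s' => if s' = tg i then r i else 0)
    (fun i x => by split_ifs <;> simp [hr i]) F]
  exact Finset.sum_congr rfl fun i _ => tsum_ite_mul _ _ F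

lemma tsum_jsqP_mul (lam : ℝ) (μ : Fin k → ℝ) (hlam : 0 ≤ lam) (hμ : ∀ i, 0 ≤ μ i)
    (s : St k) (F : St k → ℝ≥0∞) :
    ∑' s' : St k, ENNReal.ofReal (jsqP k lam μ s s') * F s' = labelSum lam μ s F := by
  classical
  calc ∑' s' : St k, ENNReal.ofReal (jsqP k lam μ s s') * F s'
      = ∑' s' : St k, ENNReal.ofReal ((chunk1 lam s s' + chunk2 μ s s') + chunk3 μ s s') * F s' := by
        exact tsum_congr fun s' => by rw [jsqP_eq]
    _ = (∑' s' : St k, ENNReal.ofReal (chunk1 lam s s' + chunk2 μ s s') * F s')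
          + ∑' s' : St k, ENNReal.ofReal (chunk3 μ s s') * F s' :=
        tsum_ofReal_add_mul _ _
          (fun x => add_nonneg (chunk1_nonneg hlam s x) (chunk2_nonneg hμ s x))
          (chunk3_nonneg hμ s) F
    _ = ((∑' s' : St k, ENNReal.ofReal (chunk1 lam s s') * F s')
          + ∑' s' : St k, ENNReal.ofReal (chunk2 μ s s') * F s')
          + ∑' s' : St k, ENNReal.ofReal (chunk3 μ s s') * F s' := by
        rw [tsum_ofReal_add_mul _ _ (chunk1_nonneg hlam s) (chunk2_nonneg hμ s) F]
    _ = labelSum lam μ s F := by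
        unfold labelSum
        congr 1
        · congr 1
          · by_cases h : (zeroSet k s.2).card = 1
            · rw [if_pos h]
              rw [tsum_congr (fun s' => by rw [chunk1, if_pos h])]
              exact tsum_ite_mul _ lam F
            · rw [if_neg h]
              rw [tsum_congr (fun s' => by rw [chunk1, if_neg h])]
              exact tsum_pointmass _ _ _
                (fun i => div_nonneg hlam (Nat.cast_nonneg _)) F
          · exact tsum_pointmass _ _ _ hμ F
        · exact tsum_pointmass _ _ _ hμ F

lemma jsqP_le_one {lam : ℝ} {μ : Fin k → ℝ} (hlam : 0 ≤ lam) (hμ : ∀ i, 0 ≤ μ i)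
    (hnorm : lam + ∑ i, μ i = 1) (s s' : St k) : jsqP k lam μ s s' ≤ 1 := by
  rw [jsqP_eq]
  have h1 : chunk1 lam s s' ≤ lam := by
    unfold chunk1
    by_cases h : (zeroSet k s.2).card = 1
    · rw [if_pos h]; split_ifs
      · exact le_rfl
      · exact hlam
    · rw [if_neg h]
      have hle : ∑ i ∈ zeroSet k s.2,
          (if s' = (s.1, Function.update s.2 i 1) then lam / (zeroSet k s.2).card else 0)
          ≤ ∑ _i ∈ zeroSet k s.2, lam / (zeroSet k s.2).card := by
        refine Finset.sum_le_sum fun i _ => ?_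
        split_ifs
        · exact le_rfl
        · positivity
      refine hle.trans ?_
      rw [Finset.sum_const, nsmul_eq_mul]
      rcases eq_or_ne ((zeroSet k s.2).card) 0 with h0 | h0
      · simp [h0, hlam]
      · rw [mul_comm, div_mul_cancel₀ _ (by exact_mod_cast h0)]
  have h2 : chunk2 μ s s' ≤ ∑ j ∈ (zeroSet k s.2)ᶜ, μ j := by
    refine Finset.sum_le_sum fun j _ => ?_
    split_ifs
    · exact le_rfl
    · exact hμ j
  have h3 : chunk3 μ s s' ≤ ∑ i ∈ zeroSet k s.2, μ i := by
    refine Finset.sum_le_sum fun i _ => ?_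
    split_ifs <;> first | exact le_rfl | exact hμ i
  have htot : (∑ i ∈ zeroSet k s.2, μ i) + ∑ j ∈ (zeroSet k s.2)ᶜ, μ j = ∑ i, μ i :=
    Finset.sum_add_sum_compl _ _
  linarith

lemma jsqP_nonneg {lam : ℝ} {μ : Fin k → ℝ} (hlam : 0 ≤ lam) (hμ : ∀ i, 0 ≤ μ i)
    (s s' : St k) : 0 ≤ jsqP k lam μ s s' := by
  rw [jsqP_eq]
  exact add_nonneg (add_nonneg (chunk1_nonneg hlam s s') (chunk2_nonneg hμ s s'))
    (chunk3_nonneg hμ s s')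

/-- `φ`-style sum in `ℝ≥0∞` with factored `ofReal`s. -/
def phiE (π : St k → ℝ) (θ : Fin (k + 1) → ℝ) : ℝ≥0∞ :=
  ∑' s : St k, ENNReal.ofReal (π s) * ENNReal.ofReal (expWeight k θ s)

lemma phi_eq_phiE (π : St k → ℝ) (hπnn : ∀ s, 0 ≤ π s) (θ : Fin (k + 1) → ℝ) :
    phi k π θ = phiE π θ :=
  tsum_congr fun s => ENNReal.ofReal_mul (hπnn s)

/-- Stationarity in extended nonnegative reals, for arbitrary nonnegative test functions. -/
lemma stationary (lam : ℝ) (μ : Fin k → ℝ) (π : St k → ℝ)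
    (hlam : 0 ≤ lam) (hμ : ∀ i, 0 ≤ μ i) (hnorm : lam + ∑ i, μ i = 1)
    (hπnn : ∀ s, 0 ≤ π s) (hπsum : HasSum π 1)
    (hπstat : ∀ s', (∑' s, π s * jsqP k lam μ s s') = π s')
    (F : St k → ℝ≥0∞) :
    ∑' s : St k, ENNReal.ofReal (π s) * (∑' s' : St k, ENNReal.ofReal (jsqP k lam μ s s') * F s')
      = ∑' s : St k, ENNReal.ofReal (π s) * F s := by
  calc ∑' s : St k, ENNReal.ofReal (π s) * (∑' s' : St k, ENNReal.ofReal (jsqP k lam μ s s') * F s')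
      = ∑' (s : St k) (s' : St k), (ENNReal.ofReal (π s) * ENNReal.ofReal (jsqP k lam μ s s')) * F s' := by
        refine tsum_congr fun s => ?_
        rw [← ENNReal.tsum_mul_left]
        exact tsum_congr fun s' => by ring
    _ = ∑' (s' : St k) (s : St k), (ENNReal.ofReal (π s) * ENNReal.ofReal (jsqP k lam μ s s')) * F s' :=
        ENNReal.tsum_comm
    _ = ∑' s' : St k, (∑' s : St k, ENNReal.ofReal (π s * jsqP k lam μ s s')) * F s' := by
        refine tsum_congr fun s' => ?_
        rw [ENNReal.tsum_mul_right]
        congr 1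
        exact tsum_congr fun s => (ENNReal.ofReal_mul (hπnn s)).symm
    _ = ∑' s' : St k, ENNReal.ofReal (π s') * F s' := by
        refine tsum_congr fun s' => ?_
        congr 1
        have hsummable : Summable (fun s : St k => π s * jsqP k lam μ s s') :=
          Summable.of_nonneg_of_le
            (fun s => mul_nonneg (hπnn s) (jsqP_nonneg hlam hμ s s'))
            (fun s => mul_le_of_le_one_right (hπnn s) (jsqP_le_one hlam hμ hnorm s s'))
            hπsum.summable
        rw [← ENNReal.ofReal_tsum_of_nonneg
          (fun s => mul_nonneg (hπnn s) (jsqP_nonneg hlam hμ s s')) hsummable, hπstat s']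

lemma tsum_pi_one (π : St k → ℝ) (hπnn : ∀ s, 0 ≤ π s) (hπsum : HasSum π 1) :
    ∑' s : St k, ENNReal.ofReal (π s) = 1 := by
  rw [← ENNReal.ofReal_tsum_of_nonneg hπnn hπsum.summable, hπsum.tsum_eq, ENNReal.ofReal_one]

lemma expWeight_pos (θ : Fin (k + 1) → ℝ) (s : St k) : 0 < expWeight k θ s :=
  Real.exp_pos _

/-- Weight of a coordinate update. -/
lemma expWeight_update (θ : Fin (k + 1) → ℝ) (m : ℕ) (y : Fin k → ℕ) (i : Fin k) (c : ℕ) :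
    expWeight k θ (m, Function.update y i c)
      = Real.exp (θ i.succ * ((c : ℝ) - (y i : ℝ))) * expWeight k θ (m, y) := by
  unfold expWeight
  rw [← Real.exp_add]
  congr 1
  have h1 : ∑ j : Fin k, θ j.succ * ((Function.update y i c j : ℕ) : ℝ)
      = θ i.succ * (c : ℝ) + ∑ j ∈ Finset.univ.erase i, θ j.succ * (y j : ℝ) := by
    rw [← Finset.add_sum_erase _ (fun j => θ j.succ * ((Function.update y i c j : ℕ) : ℝ))
      (Finset.mem_univ i)]
    rw [Function.update_self]
    congr 1
    refine Finset.sum_congr rfl fun j hj => ?_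
    rw [Function.update_of_ne (Finset.mem_erase.1 hj).1]
  have h2 : ∑ j : Fin k, θ j.succ * ((y j : ℕ) : ℝ)
      = θ i.succ * (y i : ℝ) + ∑ j ∈ Finset.univ.erase i, θ j.succ * (y j : ℝ) :=
    (Finset.add_sum_erase _ (fun j => θ j.succ * (y j : ℝ)) (Finset.mem_univ i)).symm
  simp only
  rw [h1, h2]
  ring

/-- Weight after an arrival to the unique shortest queue. -/
lemma expWeight_arr (θ : Fin (k + 1) → ℝ) (m : ℕ) (y : Fin k → ℕ) (i : Fin k)
    (hz : zeroSet k y = {i}) :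
    expWeight k θ (m + 1, fun j => y j - 1)
      = Real.exp (θ 0 - ∑ j ∈ Finset.univ.erase i, θ j.succ) * expWeight k θ (m, y) := by
  have hyi : y i = 0 := mem_zeroSet.1 (hz ▸ Finset.mem_singleton_self i)
  have hyj : ∀ j : Fin k, j ≠ i → y j ≠ 0 := by
    intro j hj h0
    exact hj (Finset.mem_singleton.1 (hz ▸ mem_zeroSet.2 h0))
  unfold expWeight
  rw [← Real.exp_add]
  congr 1
  have h1 : ∑ j : Fin k, θ j.succ * ((y j - 1 : ℕ) : ℝ)
      = ∑ j ∈ Finset.univ.erase i, (θ j.succ * (y j : ℝ) - θ j.succ) := by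
    rw [← Finset.add_sum_erase _ (fun j => θ j.succ * ((y j - 1 : ℕ) : ℝ)) (Finset.mem_univ i)]
    have hi0 : ((y i - 1 : ℕ) : ℝ) = 0 := by simp [hyi]
    rw [hi0, mul_zero, zero_add]
    refine Finset.sum_congr rfl fun j hj => ?_
    have h1le : 1 ≤ y j := Nat.one_le_iff_ne_zero.2 (hyj j (Finset.mem_erase.1 hj).1)
    rw [Nat.cast_sub h1le]
    push_cast
    ring
  have h2 : ∑ j : Fin k, θ j.succ * ((y j : ℕ) : ℝ)
      = ∑ j ∈ Finset.univ.erase i, θ j.succ * (y j : ℝ) := by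
    rw [← Finset.add_sum_erase _ (fun j => θ j.succ * (y j : ℝ)) (Finset.mem_univ i), hyi]
    simp
  simp only
  rw [h1, h2, Finset.sum_sub_distrib]
  push_cast
  ring

/-- Weight after a departure from a shortest queue (positive minimum). -/
lemma expWeight_srv (θ : Fin (k + 1) → ℝ) (m : ℕ) (y : Fin k → ℕ) (i : Fin k)
    (hyi : y i = 0) (hm : m ≠ 0) :
    expWeight k θ (m - 1, fun j => if j = i then 0 else y j + 1)
      = Real.exp (-θ 0 + ∑ j ∈ Finset.univ.erase i, θ j.succ) * expWeight k θ (m, y) := by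
  unfold expWeight
  rw [← Real.exp_add]
  congr 1
  have hm1 : ((m - 1 : ℕ) : ℝ) = (m : ℝ) - 1 := by
    rw [Nat.cast_sub (Nat.one_le_iff_ne_zero.2 hm), Nat.cast_one]
  have h1 : ∑ j : Fin k, θ j.succ * (((if j = i then 0 else y j + 1 : ℕ) : ℕ) : ℝ)
      = ∑ j ∈ Finset.univ.erase i, (θ j.succ * (y j : ℝ) + θ j.succ) := by
    rw [← Finset.add_sum_erase _
      (fun j => θ j.succ * (((if j = i then 0 else y j + 1 : ℕ) : ℕ) : ℝ)) (Finset.mem_univ i)]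
    rw [if_pos rfl]
    simp only [Nat.cast_zero, mul_zero, zero_add]
    refine Finset.sum_congr rfl fun j hj => ?_
    rw [if_neg (Finset.mem_erase.1 hj).1]
    push_cast
    ring
  have h2 : ∑ j : Fin k, θ j.succ * ((y j : ℕ) : ℝ)
      = ∑ j ∈ Finset.univ.erase i, θ j.succ * (y j : ℝ) := by
    rw [← Finset.add_sum_erase _ (fun j => θ j.succ * (y j : ℝ)) (Finset.mem_univ i), hyi]
    simp
  simp only
  rw [h1, h2, Finset.sum_add_distrib, hm1]
  ring

/-- Monotonicity of the weight in directions supported on nonzero coordinates. -/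
lemma expWeight_mono (θ1 θ2 : Fin (k + 1) → ℝ) (s : St k) (h0 : θ1 0 ≤ θ2 0)
    (h : ∀ j : Fin k, s.2 j ≠ 0 → θ1 j.succ ≤ θ2 j.succ) :
    expWeight k θ1 s ≤ expWeight k θ2 s := by
  unfold expWeight
  refine Real.exp_le_exp.2 (add_le_add ?_ ?_)
  · exact mul_le_mul_of_nonneg_right h0 (Nat.cast_nonneg _)
  · refine Finset.sum_le_sum fun j _ => ?_
    rcases eq_or_ne (s.2 j) 0 with hz | hz
    · simp [hz]
    · exact mul_le_mul_of_nonneg_right (h j hz) (Nat.cast_nonneg _)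

lemma labelSumR_nonneg {lam : ℝ} {μ : Fin k → ℝ} (hlam : 0 ≤ lam) (hμ : ∀ i, 0 ≤ μ i)
    (s : St k) (f : St k → ℝ) (hf : ∀ x, 0 ≤ f x) : 0 ≤ labelSumR lam μ s f := by
  unfold labelSumR
  refine add_nonneg (add_nonneg ?_ ?_) ?_
  · split_ifs
    · exact mul_nonneg hlam (hf _)
    · exact Finset.sum_nonneg fun i _ =>
        mul_nonneg (div_nonneg hlam (Nat.cast_nonneg _)) (hf _)
  · exact Finset.sum_nonneg fun j _ => mul_nonneg (hμ j) (hf _)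
  · exact Finset.sum_nonneg fun i _ => mul_nonneg (hμ i) (hf _)

lemma labelSum_ofReal {lam : ℝ} {μ : Fin k → ℝ} (hlam : 0 ≤ lam) (hμ : ∀ i, 0 ≤ μ i)
    (s : St k) (f : St k → ℝ) (hf : ∀ x, 0 ≤ f x) :
    labelSum lam μ s (fun s' => ENNReal.ofReal (f s')) = ENNReal.ofReal (labelSumR lam μ s f) := by
  unfold labelSum labelSumR
  have c1 : (if (zeroSet k s.2).card = 1 then
        ENNReal.ofReal lam * ENNReal.ofReal (f (s.1 + 1, fun j => s.2 j - 1))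
      else ∑ i ∈ zeroSet k s.2, ENNReal.ofReal (lam / (zeroSet k s.2).card)
        * ENNReal.ofReal (f (s.1, Function.update s.2 i 1)))
      = ENNReal.ofReal (if (zeroSet k s.2).card = 1 then
          lam * f (s.1 + 1, fun j => s.2 j - 1)
        else ∑ i ∈ zeroSet k s.2, lam / (zeroSet k s.2).card * f (s.1, Function.update s.2 i 1)) := by
    split_ifs
    · rw [ENNReal.ofReal_mul hlam]
    · rw [ENNReal.ofReal_sum_of_nonneg (fun i _ =>
        mul_nonneg (div_nonneg hlam (Nat.cast_nonneg _)) (hf _))]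
      exact Finset.sum_congr rfl fun i _ =>
        (ENNReal.ofReal_mul (div_nonneg hlam (Nat.cast_nonneg _))).symm
  have c2 : ∑ j ∈ (zeroSet k s.2)ᶜ, ENNReal.ofReal (μ j)
        * ENNReal.ofReal (f (s.1, Function.update s.2 j (s.2 j - 1)))
      = ENNReal.ofReal (∑ j ∈ (zeroSet k s.2)ᶜ, μ j * f (s.1, Function.update s.2 j (s.2 j - 1))) := by
    rw [ENNReal.ofReal_sum_of_nonneg (fun j _ => mul_nonneg (hμ j) (hf _))]
    exact Finset.sum_congr rfl fun j _ => (ENNReal.ofReal_mul (hμ j)).symm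
  have c3 : ∑ i ∈ zeroSet k s.2, ENNReal.ofReal (μ i)
        * ENNReal.ofReal (f (if s.1 = 0 then s else (s.1 - 1, fun j => if j = i then 0 else s.2 j + 1)))
      = ENNReal.ofReal (∑ i ∈ zeroSet k s.2,
          μ i * f (if s.1 = 0 then s else (s.1 - 1, fun j => if j = i then 0 else s.2 j + 1))) := by
    rw [ENNReal.ofReal_sum_of_nonneg (fun i _ => mul_nonneg (hμ i) (hf _))]
    exact Finset.sum_congr rfl fun i _ => (ENNReal.ofReal_mul (hμ i)).symm
  rw [c1, c2, c3]
  have n1 : 0 ≤ (if (zeroSet k s.2).card = 1 then lam * f (s.1 + 1, fun j => s.2 j - 1)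
      else ∑ i ∈ zeroSet k s.2, lam / (zeroSet k s.2).card * f (s.1, Function.update s.2 i 1)) := by
    split_ifs
    · exact mul_nonneg hlam (hf _)
    · exact Finset.sum_nonneg fun i _ =>
        mul_nonneg (div_nonneg hlam (Nat.cast_nonneg _)) (hf _)
  have n2 : 0 ≤ ∑ j ∈ (zeroSet k s.2)ᶜ, μ j * f (s.1, Function.update s.2 j (s.2 j - 1)) :=
    Finset.sum_nonneg fun j _ => mul_nonneg (hμ j) (hf _)
  have n3 : 0 ≤ ∑ i ∈ zeroSet k s.2,
      μ i * f (if s.1 = 0 then s else (s.1 - 1, fun j => if j = i then 0 else s.2 j + 1)) :=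
    Finset.sum_nonneg fun i _ => mul_nonneg (hμ i) (hf _)
  rw [← ENNReal.ofReal_add n1 n2, ← ENNReal.ofReal_add (add_nonneg n1 n2) n3]

lemma labelSum_mono (lam : ℝ) (μ : Fin k → ℝ) (s : St k) (F G : St k → ℝ≥0∞)
    (h : ∀ x, F x ≤ G x) : labelSum lam μ s F ≤ labelSum lam μ s G := by
  unfold labelSum
  refine add_le_add (add_le_add ?_ ?_) ?_
  · split_ifs
    · exact mul_le_mul_right (h _) _
    · exact Finset.sum_le_sum fun i _ => mul_le_mul_right (h _) _
  · exact Finset.sum_le_sum fun j _ => mul_le_mul_right (h _) _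
  · exact Finset.sum_le_sum fun i _ => mul_le_mul_right (h _) _

/-- The direction vector for the face `A`: `η₀` on the `m`-coordinate, `0` on `A`,
`η₀/(k - |A|)` elsewhere. -/
def thA (k : ℕ) (η₀ : ℝ) (A : Finset (Fin k)) : Fin (k + 1) → ℝ :=
  Fin.cons η₀ (fun j => if j ∈ A then 0 else η₀ / ((k : ℝ) - A.card))

lemma thA_zero (η₀ : ℝ) (A : Finset (Fin k)) : thA k η₀ A 0 = η₀ := rfl

lemma thA_succ (η₀ : ℝ) (A : Finset (Fin k)) (j : Fin k) :
    thA k η₀ A j.succ = if j ∈ A then 0 else η₀ / ((k : ℝ) - A.card) := by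
  simp [thA]

lemma card_lt_of_ne_univ {A : Finset (Fin k)} (hA : A ≠ Finset.univ) : A.card < k := by
  have := Finset.card_lt_iff_ne_univ A |>.2 hA
  simpa using this

lemma thA_denom_pos {A : Finset (Fin k)} (hA : A ≠ Finset.univ) : 0 < (k : ℝ) - A.card := by
  have := card_lt_of_ne_univ hA
  have : (A.card : ℝ) < k := by exact_mod_cast this
  linarith

lemma thA_succ_nonneg {η₀ : ℝ} (hη₀ : 0 ≤ η₀) (A : Finset (Fin k)) (j : Fin k) :
    0 ≤ thA k η₀ A j.succ := by
  rw [thA_succ]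
  split_ifs
  · exact le_rfl
  · have hle : (A.card : ℝ) ≤ k := by
      exact_mod_cast (by simpa using Finset.card_le_univ A : A.card ≤ k)
    exact div_nonneg hη₀ (by linarith)

lemma thA_nonneg {η₀ : ℝ} (hη₀ : 0 ≤ η₀) (A : Finset (Fin k)) (l : Fin (k + 1)) :
    0 ≤ thA k η₀ A l := by
  refine Fin.cases ?_ ?_ l
  · exact hη₀
  · exact thA_succ_nonneg hη₀ A

lemma thA_le {η₀ : ℝ} (hη₀ : 0 ≤ η₀) {A : Finset (Fin k)} (hA : A ≠ Finset.univ)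
    (l : Fin (k + 1)) : thA k η₀ A l ≤ η₀ := by
  refine Fin.cases le_rfl ?_ l
  intro j
  rw [thA_succ]
  split_ifs
  · exact hη₀
  · have h1 : (1 : ℝ) ≤ (k : ℝ) - A.card := by
      have := card_lt_of_ne_univ hA
      have : (A.card : ℝ) + 1 ≤ k := by exact_mod_cast this
      linarith
    exact div_le_self hη₀ h1

lemma thA_erase_sum {η₀ : ℝ} {A : Finset (Fin k)} (hA : A ≠ Finset.univ)
    {i : Fin k} (hi : i ∈ A) :
    ∑ j ∈ Finset.univ.erase i, thA k η₀ A j.succ = η₀ := by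
  have hne : ((k : ℝ) - A.card) ≠ 0 := (thA_denom_pos hA).ne'
  have h1 : ∑ j ∈ Finset.univ.erase i, thA k η₀ A j.succ = ∑ j : Fin k, thA k η₀ A j.succ := by
    have h := Finset.add_sum_erase Finset.univ (fun j => thA k η₀ A j.succ) (Finset.mem_univ i)
    rw [thA_succ, if_pos hi, zero_add] at h
    exact h
  rw [h1]
  have h2 : ∑ j : Fin k, thA k η₀ A j.succ = ∑ j ∈ Aᶜ, η₀ / ((k : ℝ) - A.card) := by
    rw [← Finset.sum_add_sum_compl A (fun j => thA k η₀ A j.succ)]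
    have hA0 : ∑ j ∈ A, thA k η₀ A j.succ = 0 :=
      Finset.sum_eq_zero fun j hj => by rw [thA_succ, if_pos hj]
    rw [hA0, zero_add]
    exact Finset.sum_congr rfl fun j hj => by
      rw [thA_succ, if_neg (Finset.mem_compl.1 hj)]
  rw [h2, Finset.sum_const, nsmul_eq_mul, Finset.card_compl, Fintype.card_fin,
    Nat.cast_sub (card_lt_of_ne_univ hA).le]
  field_simp

lemma exp_neg_le_one {t : ℝ} (ht : 0 ≤ t) : Real.exp (-t) ≤ 1 := by
  rw [← Real.exp_zero]
  exact Real.exp_le_exp.2 (by linarith)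

/-- The contraction gap on face `A`. -/
def delA (k : ℕ) (η₀ : ℝ) (μ : Fin k → ℝ) (A : Finset (Fin k)) : ℝ :=
  (1 - Real.exp (-(η₀ / ((k : ℝ) - A.card)))) * ∑ j ∈ Aᶜ, μ j

/-- Key per-state contraction inequality on the face `A`, for states whose set of
zero coordinates is contained in `A`, with truncation at level `N`. -/
lemma key_real (lam : ℝ) (μ : Fin k → ℝ) (η₀ : ℝ)
    (hlam : 0 ≤ lam) (hμ : ∀ i, 0 ≤ μ i) (hnorm : lam + ∑ i, μ i = 1) (hη₀ : 0 ≤ η₀)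
    (A : Finset (Fin k)) (hAne : A ≠ Finset.univ)
    (m : ℕ) (y : Fin k → ℕ) (hUA : zeroSet k y ⊆ A) (N : ℝ) (hN : 0 ≤ N) :
    labelSumR lam μ (m, y) (fun s' => min (expWeight k (thA k η₀ A) s') N)
      + (if expWeight k (thA k η₀ A) (m, y) ≤ N
          then delA k η₀ μ A * expWeight k (thA k η₀ A) (m, y) else 0)
    ≤ min (expWeight k (thA k η₀ A) (m, y)) N := by
  classical
  set θ := thA k η₀ A with hθ
  set x := expWeight k θ (m, y) with hx
  have hxpos : 0 < x := expWeight_pos θ (m, y)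
  have hθ0 : θ 0 = η₀ := rfl
  have hminnn : 0 ≤ min x N := le_min hxpos.le hN
  have hθnn : ∀ j : Fin k, 0 ≤ θ j.succ := thA_succ_nonneg hη₀ A
  have hzero : ∀ i ∈ zeroSet k y, θ i.succ = 0 := fun i hi => by
    rw [hθ, thA_succ, if_pos (hUA hi)]
  have herase : ∀ i ∈ zeroSet k y, ∑ j ∈ Finset.univ.erase i, θ j.succ = η₀ :=
    fun i hi => thA_erase_sum hAne (hUA hi)
  set f : St k → ℝ := fun s' => min (expWeight k θ s') N with hf
  have lhs_eq : labelSumR lam μ (m, y) f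
      = (if (zeroSet k y).card = 1 then lam * f (m + 1, fun j => y j - 1)
          else ∑ i ∈ zeroSet k y, lam / (zeroSet k y).card * f (m, Function.update y i 1))
        + (∑ j ∈ (zeroSet k y)ᶜ, μ j * f (m, Function.update y j (y j - 1)))
        + ∑ i ∈ zeroSet k y, μ i *
            f (if m = 0 then (m, y) else (m - 1, fun j => if j = i then 0 else y j + 1)) := rfl
  -- chunk 1
  have h1 : (if (zeroSet k y).card = 1 then lam * f (m + 1, fun j => y j - 1)
        else ∑ i ∈ zeroSet k y, lam / (zeroSet k y).card * f (m, Function.update y i 1))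
      ≤ lam * min x N := by
    split_ifs with hc
    · obtain ⟨i, hi⟩ := Finset.card_eq_one.1 hc
      have hiU : i ∈ zeroSet k y := hi ▸ Finset.mem_singleton_self i
      have : f (m + 1, fun j => y j - 1) = min x N := by
        rw [hf]
        dsimp only
        rw [expWeight_arr θ m y i hi, herase i hiU, hθ0, sub_self, Real.exp_zero, one_mul]
      rw [this]
    · have he : ∀ i ∈ zeroSet k y, f (m, Function.update y i 1) = min x N := by
        intro i hi
        rw [hf]
        dsimp only
        rw [expWeight_update θ m y i 1, mem_zeroSet.1 hi, hzero i hi]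
        norm_num
        rw [hx]
      rw [Finset.sum_congr rfl (fun i hi => by rw [he i hi])]
      rw [Finset.sum_const, nsmul_eq_mul]
      rcases eq_or_ne ((zeroSet k y).card) 0 with h0 | h0
      · rw [h0]
        simp only [Nat.cast_zero, zero_mul]
        positivity
      · have : ((zeroSet k y).card : ℝ) * (lam / (zeroSet k y).card * min x N)
            = lam * min x N := by
          field_simp
        rw [this]
  -- chunk 3
  have h3 : ∑ i ∈ zeroSet k y, μ i *
        f (if m = 0 then (m, y) else (m - 1, fun j => if j = i then 0 else y j + 1))
      = (∑ i ∈ zeroSet k y, μ i) * min x N := by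
    rw [Finset.sum_mul]
    refine Finset.sum_congr rfl fun i hi => ?_
    congr 1
    by_cases hm : m = 0
    · rw [if_pos hm]
    · rw [if_neg hm, hf]
      dsimp only
      rw [expWeight_srv θ m y i (mem_zeroSet.1 hi) hm, herase i hi, hθ0, neg_add_cancel,
        Real.exp_zero, one_mul]
  have hsplit : (∑ i ∈ zeroSet k y, μ i) + ∑ j ∈ (zeroSet k y)ᶜ, μ j = ∑ i, μ i :=
    Finset.sum_add_sum_compl _ _
  rw [lhs_eq]
  by_cases hxN : x ≤ N
  · rw [if_pos hxN]
    have hminx : min x N = x := min_eq_left hxN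
    -- chunk 2 in this case
    have h2 : ∑ j ∈ (zeroSet k y)ᶜ, μ j * f (m, Function.update y j (y j - 1))
        = ∑ j ∈ (zeroSet k y)ᶜ, μ j * (Real.exp (-θ j.succ) * x) := by
      refine Finset.sum_congr rfl fun j hj => ?_
      have hy : y j ≠ 0 := fun h => (Finset.mem_compl.1 hj) (mem_zeroSet.2 h)
      have hw : expWeight k θ (m, Function.update y j (y j - 1))
          = Real.exp (-θ j.succ) * x := by
        rw [expWeight_update θ m y j (y j - 1)]
        congr 2
        rw [Nat.cast_sub (Nat.one_le_iff_ne_zero.2 hy)]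
        push_cast
        ring
      rw [hf]
      dsimp only
      rw [hw]
      congr 1
      exact min_eq_left (le_trans
        (mul_le_of_le_one_left hxpos.le (exp_neg_le_one (hθnn j))) hxN)
    have hdel : delA k η₀ μ A + ∑ j ∈ (zeroSet k y)ᶜ, μ j * Real.exp (-θ j.succ)
        ≤ ∑ j ∈ (zeroSet k y)ᶜ, μ j := by
      have e1 : delA k η₀ μ A = ∑ j ∈ Aᶜ, μ j * (1 - Real.exp (-θ j.succ)) := by
        unfold delA
        rw [mul_comm, Finset.sum_mul]
        refine Finset.sum_congr rfl fun j hj => ?_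
        rw [hθ, thA_succ, if_neg (Finset.mem_compl.1 hj)]
      have e2 : ∑ j ∈ Aᶜ, μ j * (1 - Real.exp (-θ j.succ))
          ≤ ∑ j ∈ (zeroSet k y)ᶜ, μ j * (1 - Real.exp (-θ j.succ)) := by
        refine Finset.sum_le_sum_of_subset_of_nonneg
          (Finset.compl_subset_compl.2 hUA) (fun j _ _ => ?_)
        have := exp_neg_le_one (hθnn j)
        have := (Real.exp_pos (-θ j.succ)).le
        exact mul_nonneg (hμ j) (by linarith)
      have e3 : ∑ j ∈ (zeroSet k y)ᶜ, μ j * (1 - Real.exp (-θ j.succ))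
            + ∑ j ∈ (zeroSet k y)ᶜ, μ j * Real.exp (-θ j.succ)
          = ∑ j ∈ (zeroSet k y)ᶜ, μ j := by
        rw [← Finset.sum_add_distrib]
        exact Finset.sum_congr rfl fun j _ => by ring
      rw [e1]
      linarith
    rw [h2, h3, hminx]
    have hb : ∑ j ∈ (zeroSet k y)ᶜ, μ j * (Real.exp (-θ j.succ) * x)
        = (∑ j ∈ (zeroSet k y)ᶜ, μ j * Real.exp (-θ j.succ)) * x := by
      rw [Finset.sum_mul]
      exact Finset.sum_congr rfl fun j _ => by ring
    rw [hb]
    have hcoef : lam + (∑ j ∈ (zeroSet k y)ᶜ, μ j * Real.exp (-θ j.succ))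
        + (∑ i ∈ zeroSet k y, μ i) + delA k η₀ μ A ≤ 1 := by
      linarith
    nlinarith [h1, hxpos, hcoef, mul_le_mul_of_nonneg_right hcoef hxpos.le]
  · rw [if_neg hxN, add_zero]
    have hminN : min x N = N := min_eq_right (le_of_not_ge hxN)
    have h2 : ∑ j ∈ (zeroSet k y)ᶜ, μ j * f (m, Function.update y j (y j - 1))
        ≤ (∑ j ∈ (zeroSet k y)ᶜ, μ j) * N := by
      rw [Finset.sum_mul]
      refine Finset.sum_le_sum fun j _ => ?_
      exact mul_le_mul_of_nonneg_left (min_le_right _ _) (hμ j)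
    have h3' : ∑ i ∈ zeroSet k y, μ i *
          f (if m = 0 then (m, y) else (m - 1, fun j => if j = i then 0 else y j + 1))
        = (∑ i ∈ zeroSet k y, μ i) * N := by
      rw [h3, hminN]
    have h1' : (if (zeroSet k y).card = 1 then lam * f (m + 1, fun j => y j - 1)
        else ∑ i ∈ zeroSet k y, lam / (zeroSet k y).card * f (m, Function.update y i 1))
        ≤ lam * N := by
      rw [hminN] at h1
      exact h1
    rw [hminN]
    have hNsum : lam * N + (∑ j ∈ (zeroSet k y)ᶜ, μ j) * N
        + (∑ i ∈ zeroSet k y, μ i) * N = N := by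
      calc lam * N + (∑ j ∈ (zeroSet k y)ᶜ, μ j) * N + (∑ i ∈ zeroSet k y, μ i) * N
          = (lam + ((∑ i ∈ zeroSet k y, μ i) + ∑ j ∈ (zeroSet k y)ᶜ, μ j)) * N := by ring
        _ = 1 * N := by rw [hsplit, hnorm]
        _ = N := one_mul N
    linarith

/-- Crude per-state bound: one step expands the weight by at most `e^{kη₀}`. -/
lemma crude_real (lam : ℝ) (μ : Fin k → ℝ) (η₀ : ℝ)
    (hlam : 0 ≤ lam) (hμ : ∀ i, 0 ≤ μ i) (hnorm : lam + ∑ i, μ i = 1)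
    (hk1 : 1 ≤ k) (hη₀ : 0 ≤ η₀)
    (θ : Fin (k + 1) → ℝ) (hθnn : ∀ l, 0 ≤ θ l) (hθle : ∀ l, θ l ≤ η₀)
    (m : ℕ) (y : Fin k → ℕ) :
    labelSumR lam μ (m, y) (fun s' => expWeight k θ s')
      ≤ Real.exp (k * η₀) * expWeight k θ (m, y) := by
  classical
  set x := expWeight k θ (m, y) with hx
  have hxpos : 0 < x := expWeight_pos θ (m, y)
  set K := Real.exp (k * η₀) with hK
  have hkη : (0 : ℝ) ≤ k * η₀ := by positivity
  have hK1 : (1 : ℝ) ≤ K := Real.one_le_exp hkη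
  have hKx : 0 ≤ K * x := by positivity
  have lhs_eq : labelSumR lam μ (m, y) (fun s' => expWeight k θ s')
      = (if (zeroSet k y).card = 1 then lam * expWeight k θ (m + 1, fun j => y j - 1)
          else ∑ i ∈ zeroSet k y, lam / (zeroSet k y).card
            * expWeight k θ (m, Function.update y i 1))
        + (∑ j ∈ (zeroSet k y)ᶜ, μ j * expWeight k θ (m, Function.update y j (y j - 1)))
        + ∑ i ∈ zeroSet k y, μ i *
            expWeight k θ (if m = 0 then (m, y)
              else (m - 1, fun j => if j = i then 0 else y j + 1)) := rfl
  have hk1' : (1 : ℝ) ≤ k := by exact_mod_cast hk1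
  have hη₀K : η₀ ≤ k * η₀ := by nlinarith
  have h1 : (if (zeroSet k y).card = 1 then lam * expWeight k θ (m + 1, fun j => y j - 1)
        else ∑ i ∈ zeroSet k y, lam / (zeroSet k y).card
          * expWeight k θ (m, Function.update y i 1))
      ≤ lam * (K * x) := by
    split_ifs with hc
    · obtain ⟨i, hi⟩ := Finset.card_eq_one.1 hc
      rw [expWeight_arr θ m y i hi]
      have hexp : θ 0 - ∑ j ∈ Finset.univ.erase i, θ j.succ ≤ k * η₀ := by
        have h0 : θ 0 ≤ η₀ := hθle 0
        have hsum : 0 ≤ ∑ j ∈ Finset.univ.erase i, θ j.succ :=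
          Finset.sum_nonneg fun j _ => hθnn j.succ
        linarith
      have : Real.exp (θ 0 - ∑ j ∈ Finset.univ.erase i, θ j.succ) ≤ K :=
        Real.exp_le_exp.2 hexp
      have := mul_le_mul_of_nonneg_right this hxpos.le
      nlinarith
    · have he : ∀ i ∈ zeroSet k y,
          expWeight k θ (m, Function.update y i 1) ≤ K * x := by
        intro i hi
        rw [expWeight_update θ m y i 1, mem_zeroSet.1 hi]
        simp only [Nat.cast_one, Nat.cast_zero, sub_zero, mul_one]
        have hexp : Real.exp (θ i.succ) ≤ K :=
          Real.exp_le_exp.2 (le_trans (hθle i.succ) hη₀K)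
        exact mul_le_mul_of_nonneg_right hexp hxpos.le
      calc ∑ i ∈ zeroSet k y, lam / (zeroSet k y).card
            * expWeight k θ (m, Function.update y i 1)
          ≤ ∑ _i ∈ zeroSet k y, lam / (zeroSet k y).card * (K * x) := by
            refine Finset.sum_le_sum fun i hi => ?_
            exact mul_le_mul_of_nonneg_left (he i hi) (by positivity)
        _ ≤ lam * (K * x) := by
            rw [Finset.sum_const, nsmul_eq_mul]
            rcases eq_or_ne ((zeroSet k y).card) 0 with h0 | h0
            · rw [h0]; simp only [Nat.cast_zero, zero_mul]; positivity
            · have : ((zeroSet k y).card : ℝ) * (lam / (zeroSet k y).card * (K * x))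
                  = lam * (K * x) := by field_simp
              rw [this]
  have h2 : ∑ j ∈ (zeroSet k y)ᶜ, μ j * expWeight k θ (m, Function.update y j (y j - 1))
      ≤ ∑ j ∈ (zeroSet k y)ᶜ, μ j * (K * x) := by
    refine Finset.sum_le_sum fun j hj => ?_
    have hy : y j ≠ 0 := fun h => (Finset.mem_compl.1 hj) (mem_zeroSet.2 h)
    have hw : expWeight k θ (m, Function.update y j (y j - 1))
        = Real.exp (-θ j.succ) * x := by
      rw [expWeight_update θ m y j (y j - 1)]
      congr 2
      rw [Nat.cast_sub (Nat.one_le_iff_ne_zero.2 hy)]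
      push_cast
      ring
    rw [hw]
    have h1' : Real.exp (-θ j.succ) * x ≤ 1 * x :=
      mul_le_mul_of_nonneg_right (exp_neg_le_one (hθnn j.succ)) hxpos.le
    have : (1 : ℝ) * x ≤ K * x := mul_le_mul_of_nonneg_right hK1 hxpos.le
    exact mul_le_mul_of_nonneg_left (by linarith) (hμ j)
  have h3 : ∑ i ∈ zeroSet k y, μ i *
        expWeight k θ (if m = 0 then (m, y) else (m - 1, fun j => if j = i then 0 else y j + 1))
      ≤ ∑ i ∈ zeroSet k y, μ i * (K * x) := by
    refine Finset.sum_le_sum fun i hi => ?_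
    refine mul_le_mul_of_nonneg_left ?_ (hμ i)
    by_cases hm : m = 0
    · rw [if_pos hm]
      nlinarith
    · rw [if_neg hm, expWeight_srv θ m y i (mem_zeroSet.1 hi) hm]
      have hexp : -θ 0 + ∑ j ∈ Finset.univ.erase i, θ j.succ ≤ k * η₀ := by
        have hsum : ∑ j ∈ Finset.univ.erase i, θ j.succ
            ≤ ∑ _j ∈ Finset.univ.erase i, η₀ :=
          Finset.sum_le_sum fun j _ => hθle j.succ
        rw [Finset.sum_const, nsmul_eq_mul] at hsum
        have hcard : ((Finset.univ.erase i).card : ℝ) ≤ k := by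
          have : (Finset.univ.erase i).card ≤ k := by
            calc (Finset.univ.erase i).card ≤ Finset.univ.card := Finset.card_le_card
                  (Finset.erase_subset _ _)
              _ = k := by simp
          exact_mod_cast this
        have := hθnn 0
        nlinarith
      have : Real.exp (-θ 0 + ∑ j ∈ Finset.univ.erase i, θ j.succ) ≤ K :=
        Real.exp_le_exp.2 hexp
      nlinarith
  have hsplit : (∑ i ∈ zeroSet k y, μ i) + ∑ j ∈ (zeroSet k y)ᶜ, μ j = ∑ i, μ i :=
    Finset.sum_add_sum_compl _ _
  rw [lhs_eq]
  have e2 : ∑ j ∈ (zeroSet k y)ᶜ, μ j * (K * x) = (∑ j ∈ (zeroSet k y)ᶜ, μ j) * (K * x) :=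
    (Finset.sum_mul _ _ _).symm
  have e3 : ∑ i ∈ zeroSet k y, μ i * (K * x) = (∑ i ∈ zeroSet k y, μ i) * (K * x) :=
    (Finset.sum_mul _ _ _).symm
  rw [e2] at h2
  rw [e3] at h3
  nlinarith [h1, h2, h3, hKx]

lemma face (lam : ℝ) (μ : Fin k → ℝ) (π : St k → ℝ) (η₀ : ℝ)
    (hk : 2 ≤ k) (hlam : 0 < lam) (hμ : ∀ i, 0 < μ i) (hnorm : lam + ∑ i, μ i = 1)
    (hπnn : ∀ s, 0 ≤ π s) (hπsum : HasSum π 1)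
    (hπstat : ∀ s', (∑' s, π s * jsqP k lam μ s s') = π s')
    (hη₀ : 0 < η₀)
    (hfin : phiE π (Fin.cons η₀ (fun _ => (0 : ℝ))) < ⊤) :
    ∀ (n : ℕ) (A : Finset (Fin k)), A.Nonempty → k ≤ A.card + n →
      phiE π (thA k η₀ A) < ⊤ := by
  classical
  have hμ0 : ∀ i, 0 ≤ μ i := fun i => (hμ i).le
  have huniv : phiE π (thA k η₀ Finset.univ) < ⊤ := by
    have he : thA k η₀ (Finset.univ : Finset (Fin k)) = Fin.cons η₀ (fun _ => (0 : ℝ)) := by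
      funext l
      refine Fin.cases rfl (fun j => ?_) l
      rw [thA_succ, if_pos (Finset.mem_univ j)]
      simp
    rw [he]
    exact hfin
  have hπ1 : ∑' s : St k, ENNReal.ofReal (π s) = 1 := tsum_pi_one π hπnn hπsum
  have station : ∀ F : St k → ℝ≥0∞,
      ∑' s : St k, ENNReal.ofReal (π s) * labelSum lam μ s F
        = ∑' s : St k, ENNReal.ofReal (π s) * F s := by
    intro F
    rw [← stationary lam μ π hlam.le hμ0 hnorm hπnn hπsum hπstat F]
    exact tsum_congr fun s => by rw [tsum_jsqP_mul lam μ hlam.le hμ0 s F]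
  intro n
  induction n with
  | zero =>
      intro A hA hcard
      have h1 : A.card ≤ k := by simpa using Finset.card_le_univ A
      have hAu : A = Finset.univ := by
        apply Finset.eq_univ_of_card
        rw [Fintype.card_fin]
        omega
      rw [hAu]
      exact huniv
  | succ n ih =>
      intro A hA hcard
      by_cases hAu : A = Finset.univ
      · rw [hAu]; exact huniv
      -- main step
      set θ := thA k η₀ A with hθdef
      set δ := delA k η₀ μ A with hδdef
      have hδpos : 0 < δ := by
        rw [hδdef]
        unfold delA
        have ht : 0 < η₀ / ((k : ℝ) - A.card) := div_pos hη₀ (thA_denom_pos hAu)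
        have h1 : Real.exp (-(η₀ / ((k : ℝ) - A.card))) < 1 := by
          rw [← Real.exp_zero]
          exact Real.exp_lt_exp.2 (by linarith)
        have h2 : 0 < ∑ j ∈ Aᶜ, μ j := by
          refine Finset.sum_pos (fun j _ => hμ j) ?_
          refine Finset.nonempty_iff_ne_empty.2 fun h => hAu ?_
          exact (Finset.compl_eq_empty_iff A).1 h
        nlinarith
      set K := ENNReal.ofReal (Real.exp (k * η₀)) with hKdef
      have hKne : K ≠ ⊤ := ENNReal.ofReal_ne_top
      set BS : Finset (Finset (Fin k)) := Finset.univ.filter (fun B => A ⊂ B) with hBS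
      set C : ℝ≥0∞ := ∑ B ∈ BS, phiE π (thA k η₀ B) with hC
      have hCfin : C < ⊤ := by
        rw [hC]
        refine ENNReal.sum_lt_top.2 fun B hB => ?_
        have hssub : A ⊂ B := (Finset.mem_filter.1 hB).2
        have hBne : B.Nonempty := hA.mono hssub.subset
        have hBcard : k ≤ B.card + n := by
          have := Finset.card_lt_card hssub
          omega
        exact ih B hBne hBcard
      have hxB : ∀ s : St k, ¬ zeroSet k s.2 ⊆ A →
          ENNReal.ofReal (expWeight k θ s)
            ≤ ∑ B ∈ BS, ENNReal.ofReal (expWeight k (thA k η₀ B) s) := by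
        intro s hsub
        set B0 := A ∪ zeroSet k s.2 with hB0
        have hAB0 : A ⊂ B0 := by
          refine (Finset.ssubset_iff_of_subset Finset.subset_union_left).2 ?_
          obtain ⟨i, hiU, hiA⟩ := Finset.not_subset.1 hsub
          exact ⟨i, Finset.mem_union_right _ hiU, hiA⟩
        have hmem : B0 ∈ BS := Finset.mem_filter.2 ⟨Finset.mem_univ _, hAB0⟩
        refine le_trans ?_ (Finset.single_le_sum
          (fun B _ => (zero_le : (0:ℝ≥0∞) ≤ ENNReal.ofReal (expWeight k (thA k η₀ B) s))) hmem)
        apply ENNReal.ofReal_le_ofReal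
        apply expWeight_mono θ (thA k η₀ B0) s le_rfl
        intro j hj
        have hjU : j ∉ zeroSet k s.2 := fun h => hj (mem_zeroSet.1 h)
        rw [hθdef, thA_succ, thA_succ]
        by_cases hjA : j ∈ A
        · rw [if_pos hjA, if_pos (Finset.mem_union_left _ hjA)]
        · have hjB0 : j ∉ B0 := fun hmem' => by
            rcases Finset.mem_union.1 hmem' with h | h
            · exact hjA h
            · exact hjU h
          rw [if_neg hjA, if_neg hjB0]
          have hB0ne : B0 ≠ Finset.univ := fun h => hjB0 (h ▸ Finset.mem_univ j)
          have h1 : (0:ℝ) < (k:ℝ) - B0.card := thA_denom_pos hB0ne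
          have h2 : (k:ℝ) - B0.card ≤ (k:ℝ) - A.card := by
            have hc := Finset.card_le_card hAB0.subset
            have : (A.card:ℝ) ≤ B0.card := by exact_mod_cast hc
            linarith
          exact div_le_div_of_nonneg_left hη₀.le h1 h2
      have hDN : ∀ N : ℝ, 0 ≤ N →
          (∑' s : St k, ENNReal.ofReal (π s)
            * ENNReal.ofReal (if expWeight k θ s ≤ N ∧ zeroSet k s.2 ⊆ A
                then δ * expWeight k θ s else 0)) ≤ K * C := by
        intro N hN
        set Fn : St k → ℝ≥0∞ := fun s' => ENNReal.ofReal (min (expWeight k θ s') N) with hFn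
        have hFnnn : ∀ x : St k, 0 ≤ min (expWeight k θ x) N :=
          fun x => le_min (expWeight_pos θ x).le hN
        have key : ∀ s : St k,
            ENNReal.ofReal (π s) * labelSum lam μ s Fn
              + ENNReal.ofReal (π s) * ENNReal.ofReal (if expWeight k θ s ≤ N ∧ zeroSet k s.2 ⊆ A
                  then δ * expWeight k θ s else 0)
            ≤ (if zeroSet k s.2 ⊆ A then ENNReal.ofReal (π s) * Fn s else 0)
              + ENNReal.ofReal (π s)
                * (K * ∑ B ∈ BS, ENNReal.ofReal (expWeight k (thA k η₀ B) s)) := by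
          intro s
          by_cases hsub : zeroSet k s.2 ⊆ A
          · rw [if_pos hsub]
            refine le_trans ?_ le_self_add
            rw [← mul_add]
            refine mul_le_mul_right ?_ _
            have hcond : (if expWeight k θ s ≤ N ∧ zeroSet k s.2 ⊆ A
                then δ * expWeight k θ s else 0)
                = (if expWeight k θ s ≤ N then δ * expWeight k θ s else 0) := by
              by_cases hxle : expWeight k θ s ≤ N
              · rw [if_pos ⟨hxle, hsub⟩, if_pos hxle]
              · rw [if_neg (fun h => hxle h.1), if_neg hxle]
            rw [hcond]
            obtain ⟨m, y⟩ := s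
            rw [hFn, labelSum_ofReal hlam.le hμ0 (m, y) _ hFnnn]
            have hkr := key_real lam μ η₀ hlam.le hμ0 hnorm hη₀.le A hAu m y hsub N hN
            have hLnn : 0 ≤ labelSumR lam μ (m, y) (fun s' => min (expWeight k θ s') N) :=
              labelSumR_nonneg hlam.le hμ0 _ _ hFnnn
            have hindnn : 0 ≤ (if expWeight k θ (m, y) ≤ N
                then δ * expWeight k θ (m, y) else 0) := by
              split_ifs
              · exact mul_nonneg hδpos.le (expWeight_pos θ _).le
              · exact le_rfl
            calc ENNReal.ofReal (labelSumR lam μ (m, y) (fun s' => min (expWeight k θ s') N))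
                  + ENNReal.ofReal (if expWeight k θ (m, y) ≤ N
                      then δ * expWeight k θ (m, y) else 0)
                = ENNReal.ofReal (labelSumR lam μ (m, y) (fun s' => min (expWeight k θ s') N)
                    + (if expWeight k θ (m, y) ≤ N then δ * expWeight k θ (m, y) else 0)) :=
                  (ENNReal.ofReal_add hLnn hindnn).symm
              _ ≤ ENNReal.ofReal (min (expWeight k θ (m, y)) N) := ENNReal.ofReal_le_ofReal hkr
          · rw [if_neg hsub]
            have hc0 : (if expWeight k θ s ≤ N ∧ zeroSet k s.2 ⊆ A
                then δ * expWeight k θ s else 0) = 0 := if_neg (fun h => hsub h.2)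
            rw [hc0, ENNReal.ofReal_zero, mul_zero, add_zero, zero_add]
            refine mul_le_mul_right ?_ _
            obtain ⟨m, y⟩ := s
            calc labelSum lam μ (m, y) Fn
                ≤ labelSum lam μ (m, y) (fun s' => ENNReal.ofReal (expWeight k θ s')) :=
                  labelSum_mono _ _ _ _ _
                    (fun x => ENNReal.ofReal_le_ofReal (min_le_left _ _))
              _ = ENNReal.ofReal (labelSumR lam μ (m, y) (fun s' => expWeight k θ s')) :=
                  labelSum_ofReal hlam.le hμ0 _ _ (fun x => (expWeight_pos θ x).le)
              _ ≤ ENNReal.ofReal (Real.exp (k * η₀) * expWeight k θ (m, y)) :=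
                  ENNReal.ofReal_le_ofReal (crude_real lam μ η₀ hlam.le hμ0 hnorm
                    (by omega : 1 ≤ k) hη₀.le θ (thA_nonneg hη₀.le A) (thA_le hη₀.le hAu) m y)
              _ = K * ENNReal.ofReal (expWeight k θ (m, y)) := by
                  rw [hKdef, ← ENNReal.ofReal_mul (Real.exp_pos _).le]
              _ ≤ K * ∑ B ∈ BS, ENNReal.ofReal (expWeight k (thA k η₀ B) (m, y)) :=
                  mul_le_mul_right (hxB (m, y) hsub) _
        have hsum := Summable.tsum_le_tsum key ENNReal.summable ENNReal.summable
        rw [ENNReal.tsum_add, ENNReal.tsum_add, station Fn] at hsum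
        set W : ℝ≥0∞ := ∑' s : St k, ENNReal.ofReal (π s) * Fn s with hW
        have hWfin : W ≤ ENNReal.ofReal N := by
          rw [hW]
          calc ∑' s : St k, ENNReal.ofReal (π s) * Fn s
              ≤ ∑' s : St k, ENNReal.ofReal (π s) * ENNReal.ofReal N :=
                Summable.tsum_le_tsum (fun s => mul_le_mul_right
                  (ENNReal.ofReal_le_ofReal (min_le_right _ _)) _)
                  ENNReal.summable ENNReal.summable
            _ = (∑' s : St k, ENNReal.ofReal (π s)) * ENNReal.ofReal N := ENNReal.tsum_mul_right
            _ = ENNReal.ofReal N := by rw [hπ1, one_mul]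
        have hfirst : ∑' s : St k, (if zeroSet k s.2 ⊆ A then ENNReal.ofReal (π s) * Fn s else 0)
            ≤ W := by
          rw [hW]
          refine Summable.tsum_le_tsum (fun s => ?_) ENNReal.summable ENNReal.summable
          split_ifs
          · exact le_rfl
          · exact zero_le
        have hsecond : ∑' s : St k, ENNReal.ofReal (π s)
            * (K * ∑ B ∈ BS, ENNReal.ofReal (expWeight k (thA k η₀ B) s)) = K * C := by
          calc ∑' s : St k, ENNReal.ofReal (π s)
                * (K * ∑ B ∈ BS, ENNReal.ofReal (expWeight k (thA k η₀ B) s))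
              = ∑' s : St k, K * ∑ B ∈ BS,
                  (ENNReal.ofReal (π s) * ENNReal.ofReal (expWeight k (thA k η₀ B) s)) := by
                refine tsum_congr fun s => ?_
                calc ENNReal.ofReal (π s)
                      * (K * ∑ B ∈ BS, ENNReal.ofReal (expWeight k (thA k η₀ B) s))
                    = ∑ B ∈ BS, ENNReal.ofReal (π s)
                        * (K * ENNReal.ofReal (expWeight k (thA k η₀ B) s)) := by
                      rw [Finset.mul_sum, Finset.mul_sum]
                  _ = ∑ B ∈ BS, K * (ENNReal.ofReal (π s)
                        * ENNReal.ofReal (expWeight k (thA k η₀ B) s)) :=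
                      Finset.sum_congr rfl fun B _ => by ring
                  _ = K * ∑ B ∈ BS, ENNReal.ofReal (π s)
                        * ENNReal.ofReal (expWeight k (thA k η₀ B) s) :=
                      (Finset.mul_sum _ _ _).symm
            _ = K * ∑' s : St k, ∑ B ∈ BS, (ENNReal.ofReal (π s)
                  * ENNReal.ofReal (expWeight k (thA k η₀ B) s)) := ENNReal.tsum_mul_left
            _ = K * ∑ B ∈ BS, ∑' s : St k, (ENNReal.ofReal (π s)
                  * ENNReal.ofReal (expWeight k (thA k η₀ B) s)) := by
                rw [Summable.tsum_finsetSum (fun B _ => ENNReal.summable)]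
            _ = K * C := rfl
        have hfin2 : W + (∑' s : St k, ENNReal.ofReal (π s)
            * ENNReal.ofReal (if expWeight k θ s ≤ N ∧ zeroSet k s.2 ⊆ A
                then δ * expWeight k θ s else 0)) ≤ W + K * C :=
          le_trans hsum (add_le_add hfirst (le_of_eq hsecond))
        exact (ENNReal.add_le_add_iff_left
          (lt_of_le_of_lt hWfin ENNReal.ofReal_lt_top).ne).1 hfin2
      -- let N → ∞
      have hD : (∑' s : St k, ENNReal.ofReal (π s)
          * ENNReal.ofReal (if zeroSet k s.2 ⊆ A then δ * expWeight k θ s else 0)) ≤ K * C := by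
        rw [ENNReal.tsum_eq_iSup_sum]
        refine iSup_le fun T => ?_
        set N : ℝ := ∑ s ∈ T, expWeight k θ s with hNdef
        have hN : 0 ≤ N := Finset.sum_nonneg fun s _ => (expWeight_pos θ s).le
        have hterm : ∀ s ∈ T, ENNReal.ofReal (π s)
            * ENNReal.ofReal (if zeroSet k s.2 ⊆ A then δ * expWeight k θ s else 0)
            ≤ ENNReal.ofReal (π s)
              * ENNReal.ofReal (if expWeight k θ s ≤ N ∧ zeroSet k s.2 ⊆ A
                  then δ * expWeight k θ s else 0) := by
          intro s hs
          refine mul_le_mul_right (ENNReal.ofReal_le_ofReal ?_) _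
          by_cases hsub : zeroSet k s.2 ⊆ A
          · rw [if_pos hsub, if_pos ⟨Finset.single_le_sum
              (fun s _ => (expWeight_pos θ s).le) hs, hsub⟩]
          · rw [if_neg hsub, if_neg (fun h => hsub h.2)]
        calc ∑ s ∈ T, ENNReal.ofReal (π s)
              * ENNReal.ofReal (if zeroSet k s.2 ⊆ A then δ * expWeight k θ s else 0)
            ≤ ∑ s ∈ T, ENNReal.ofReal (π s)
              * ENNReal.ofReal (if expWeight k θ s ≤ N ∧ zeroSet k s.2 ⊆ A
                  then δ * expWeight k θ s else 0) := Finset.sum_le_sum hterm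
          _ ≤ ∑' s : St k, ENNReal.ofReal (π s)
              * ENNReal.ofReal (if expWeight k θ s ≤ N ∧ zeroSet k s.2 ⊆ A
                  then δ * expWeight k θ s else 0) := ENNReal.sum_le_tsum T
          _ ≤ K * C := hDN N hN
      -- conclude
      have split1 : phiE π θ
          = (∑' s : St k, ENNReal.ofReal (π s)
              * ENNReal.ofReal (if zeroSet k s.2 ⊆ A then expWeight k θ s else 0))
            + (∑' s : St k, ENNReal.ofReal (π s)
              * ENNReal.ofReal (if zeroSet k s.2 ⊆ A then 0 else expWeight k θ s)) := by
        rw [← ENNReal.tsum_add]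
        refine tsum_congr fun s => ?_
        rw [← mul_add, ← ENNReal.ofReal_add
          (by split_ifs; exacts [(expWeight_pos θ s).le, le_rfl])
          (by split_ifs; exacts [le_rfl, (expWeight_pos θ s).le])]
        have he : (if zeroSet k s.2 ⊆ A then expWeight k θ s else 0)
            + (if zeroSet k s.2 ⊆ A then 0 else expWeight k θ s) = expWeight k θ s := by
          split_ifs <;> simp
        rw [he]
      have part1fin : (∑' s : St k, ENNReal.ofReal (π s)
          * ENNReal.ofReal (if zeroSet k s.2 ⊆ A then expWeight k θ s else 0)) < ⊤ := by
        have hdl : ENNReal.ofReal δ * (∑' s : St k, ENNReal.ofReal (π s)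
            * ENNReal.ofReal (if zeroSet k s.2 ⊆ A then expWeight k θ s else 0))
            = ∑' s : St k, ENNReal.ofReal (π s)
              * ENNReal.ofReal (if zeroSet k s.2 ⊆ A then δ * expWeight k θ s else 0) := by
          rw [← ENNReal.tsum_mul_left]
          refine tsum_congr fun s => ?_
          have he : ENNReal.ofReal δ
              * ENNReal.ofReal (if zeroSet k s.2 ⊆ A then expWeight k θ s else 0)
              = ENNReal.ofReal (if zeroSet k s.2 ⊆ A then δ * expWeight k θ s else 0) := by
            split_ifs
            · rw [← ENNReal.ofReal_mul hδpos.le]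
            · simp
          rw [← he]
          ring
        have hKC : K * C < ⊤ := ENNReal.mul_lt_top hKne.lt_top hCfin
        by_contra htop
        have h1 : (∑' s : St k, ENNReal.ofReal (π s)
            * ENNReal.ofReal (if zeroSet k s.2 ⊆ A then expWeight k θ s else 0)) = ⊤ := by
          simpa [lt_top_iff_ne_top] using htop
        rw [h1, ENNReal.mul_top (by
          simp only [ne_eq, ENNReal.ofReal_eq_zero, not_le]
          exact hδpos)] at hdl
        rw [← hdl] at hD
        exact absurd (lt_of_le_of_lt hD hKC) (lt_irrefl ⊤)
      have part2 : (∑' s : St k, ENNReal.ofReal (π s)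
          * ENNReal.ofReal (if zeroSet k s.2 ⊆ A then 0 else expWeight k θ s)) ≤ C := by
        have hterm : ∀ s : St k, ENNReal.ofReal (π s)
            * ENNReal.ofReal (if zeroSet k s.2 ⊆ A then 0 else expWeight k θ s)
            ≤ ∑ B ∈ BS, ENNReal.ofReal (π s)
              * ENNReal.ofReal (expWeight k (thA k η₀ B) s) := by
          intro s
          by_cases hsub : zeroSet k s.2 ⊆ A
          · rw [if_pos hsub, ENNReal.ofReal_zero, mul_zero]
            exact zero_le
          · rw [if_neg hsub]
            calc ENNReal.ofReal (π s) * ENNReal.ofReal (expWeight k θ s)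
                ≤ ENNReal.ofReal (π s)
                  * ∑ B ∈ BS, ENNReal.ofReal (expWeight k (thA k η₀ B) s) :=
                  mul_le_mul_right (hxB s hsub) _
              _ = ∑ B ∈ BS, ENNReal.ofReal (π s)
                  * ENNReal.ofReal (expWeight k (thA k η₀ B) s) := Finset.mul_sum _ _ _
        calc ∑' s : St k, ENNReal.ofReal (π s)
            * ENNReal.ofReal (if zeroSet k s.2 ⊆ A then 0 else expWeight k θ s)
            ≤ ∑' s : St k, ∑ B ∈ BS, ENNReal.ofReal (π s)
              * ENNReal.ofReal (expWeight k (thA k η₀ B) s) :=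
              Summable.tsum_le_tsum hterm ENNReal.summable ENNReal.summable
          _ = ∑ B ∈ BS, ∑' s : St k, ENNReal.ofReal (π s)
              * ENNReal.ofReal (expWeight k (thA k η₀ B) s) :=
              Summable.tsum_finsetSum (fun B _ => ENNReal.summable)
          _ = C := rfl
      rw [show phiE π (thA k η₀ A) = phiE π θ from rfl, split1]
      exact ENNReal.add_lt_top.2 ⟨part1fin, lt_of_le_of_lt part2 hCfin⟩

end JSQ
end JSQaux

open Finset JSQ in
/-- **Expansion in the `η₁` direction:** if `η₀ > 0` and `φ(η₀, 0·𝟙) = E[e^{η₀ M}] < ∞`,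
then `φ(η₀, (η₀/(k−1))·𝟙) < ∞`. -/
theorem jsq_direction_eta1
    (k : ℕ) (hk : 2 ≤ k) (lam : ℝ) (μ : Fin k → ℝ)
    (hlam : 0 < lam) (hμ : ∀ i, 0 < μ i)
    (hnorm : lam + ∑ i, μ i = 1)
    (hρ : rho k lam μ < 1)
    (π : ℕ × (Fin k → ℕ) → ℝ)
    (hπnn : ∀ s, 0 ≤ π s)
    (hπsupp : ∀ s, π s ≠ 0 → ∃ i : Fin k, s.2 i = 0)
    (hπsum : HasSum π 1)
    (hπstat : ∀ s', (∑' s, π s * jsqP k lam μ s s') = π s')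
    (η₀ : ℝ) (hη₀ : 0 < η₀)
    (hfin : phi k π (Fin.cons η₀ (fun _ => 0)) < ⊤) :
    phi k π (Fin.cons η₀ (fun _ => η₀ / ((k : ℝ) - 1))) < ⊤ := by
  classical
  have hμ0 : ∀ i, 0 ≤ μ i := fun i => (hμ i).le
  rw [phi_eq_phiE π hπnn]
  set θs : Fin (k + 1) → ℝ := Fin.cons η₀ (fun _ => η₀ / ((k : ℝ) - 1)) with hθs
  have hk1 : (1 : ℝ) ≤ (k : ℝ) - 1 := by
    have : (2 : ℝ) ≤ (k : ℝ) := by exact_mod_cast hk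
    linarith
  have hθs0 : ∀ l, 0 ≤ θs l := by
    refine Fin.cases hη₀.le fun j => ?_
    rw [hθs]
    simp only [Fin.cons_succ]
    positivity
  have hθssucc : ∀ j : Fin k, θs j.succ = η₀ / ((k : ℝ) - 1) := fun j => by
    rw [hθs]; simp
  have hθsle : ∀ l, θs l ≤ η₀ := by
    refine Fin.cases le_rfl fun j => ?_
    rw [hθssucc]
    exact div_le_self hη₀.le hk1
  have hfinE : phiE π (Fin.cons η₀ (fun _ => (0 : ℝ))) < ⊤ := by
    rw [← phi_eq_phiE π hπnn]; exact hfin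
  have hface := face lam μ π η₀ hk hlam hμ hnorm hπnn hπsum hπstat hη₀ hfinE
  set BS0 : Finset (Finset (Fin k)) := Finset.univ.filter (fun B => B.Nonempty) with hBS0
  set C0 : ℝ≥0∞ := ∑ B ∈ BS0, phiE π (thA k η₀ B) with hC0
  have hC0fin : C0 < ⊤ := by
    rw [hC0]
    refine ENNReal.sum_lt_top.2 fun B hB => ?_
    exact hface k B (Finset.mem_filter.1 hB).2 (by omega : k ≤ B.card + k)
  set K := ENNReal.ofReal (Real.exp (k * η₀)) with hK
  have hKne : K ≠ ⊤ := ENNReal.ofReal_ne_top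
  have station :
      ∑' s : St k, ENNReal.ofReal (π s)
          * labelSum lam μ s (fun s' => ENNReal.ofReal (expWeight k θs s'))
        = ∑' s : St k, ENNReal.ofReal (π s) * ENNReal.ofReal (expWeight k θs s) := by
    rw [← stationary lam μ π hlam.le hμ0 hnorm hπnn hπsum hπstat
      (fun s' => ENNReal.ofReal (expWeight k θs s'))]
    exact tsum_congr fun s => by
      rw [tsum_jsqP_mul lam μ hlam.le hμ0 s (fun s' => ENNReal.ofReal (expWeight k θs s'))]
  have hbnd : ∀ s : St k,
      ENNReal.ofReal (π s)
          * labelSum lam μ s (fun s' => ENNReal.ofReal (expWeight k θs s'))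
        ≤ ENNReal.ofReal (π s)
          * (K * ∑ B ∈ BS0, ENNReal.ofReal (expWeight k (thA k η₀ B) s)) := by
    intro s
    rcases eq_or_ne (π s) 0 with h0 | h0
    · rw [h0]; simp
    · refine mul_le_mul_right ?_ _
      obtain ⟨i, hi⟩ := hπsupp s h0
      obtain ⟨m, y⟩ := s
      have hUne : (zeroSet k y).Nonempty := ⟨i, mem_zeroSet.2 hi⟩
      have hUBS : zeroSet k y ∈ BS0 := Finset.mem_filter.2 ⟨Finset.mem_univ _, hUne⟩
      calc labelSum lam μ (m, y) (fun s' => ENNReal.ofReal (expWeight k θs s'))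
          = ENNReal.ofReal (labelSumR lam μ (m, y) (fun s' => expWeight k θs s')) :=
            labelSum_ofReal hlam.le hμ0 _ _ (fun x => (expWeight_pos θs x).le)
        _ ≤ ENNReal.ofReal (Real.exp (k * η₀) * expWeight k θs (m, y)) :=
            ENNReal.ofReal_le_ofReal (crude_real lam μ η₀ hlam.le hμ0 hnorm
              (by omega : 1 ≤ k) hη₀.le θs hθs0 hθsle m y)
        _ = K * ENNReal.ofReal (expWeight k θs (m, y)) := by
            rw [hK, ← ENNReal.ofReal_mul (Real.exp_pos _).le]
        _ ≤ K * ∑ B ∈ BS0, ENNReal.ofReal (expWeight k (thA k η₀ B) (m, y)) := by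
            refine mul_le_mul_right ?_ _
            refine le_trans (ENNReal.ofReal_le_ofReal ?_)
              (Finset.single_le_sum (fun B _ =>
                (zero_le : (0:ℝ≥0∞) ≤ ENNReal.ofReal (expWeight k (thA k η₀ B) (m, y)))) hUBS)
            apply expWeight_mono θs (thA k η₀ (zeroSet k y)) (m, y) le_rfl
            intro j hj
            have hjU : j ∉ zeroSet k y := fun h => hj (mem_zeroSet.1 h)
            have hUniv : zeroSet k y ≠ Finset.univ := fun h => hjU (h ▸ Finset.mem_univ j)
            rw [hθssucc, thA_succ, if_neg hjU]
            have h1 : (0:ℝ) < (k:ℝ) - (zeroSet k y).card := thA_denom_pos hUniv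
            have h2 : (k:ℝ) - (zeroSet k y).card ≤ (k:ℝ) - 1 := by
              have hcp : 1 ≤ (zeroSet k y).card := Finset.card_pos.2 hUne
              have : (1:ℝ) ≤ ((zeroSet k y).card : ℝ) := by exact_mod_cast hcp
              linarith
            exact div_le_div_of_nonneg_left hη₀.le h1 h2
  calc phiE π θs
      = ∑' s : St k, ENNReal.ofReal (π s)
          * labelSum lam μ s (fun s' => ENNReal.ofReal (expWeight k θs s')) := station.symm
    _ ≤ ∑' s : St k, ENNReal.ofReal (π s)
          * (K * ∑ B ∈ BS0, ENNReal.ofReal (expWeight k (thA k η₀ B) s)) :=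
        Summable.tsum_le_tsum hbnd ENNReal.summable ENNReal.summable
    _ = K * C0 := by
        calc ∑' s : St k, ENNReal.ofReal (π s)
              * (K * ∑ B ∈ BS0, ENNReal.ofReal (expWeight k (thA k η₀ B) s))
            = ∑' s : St k, K * ∑ B ∈ BS0,
                (ENNReal.ofReal (π s) * ENNReal.ofReal (expWeight k (thA k η₀ B) s)) := by
              refine tsum_congr fun s => ?_
              calc ENNReal.ofReal (π s)
                    * (K * ∑ B ∈ BS0, ENNReal.ofReal (expWeight k (thA k η₀ B) s))
                  = ∑ B ∈ BS0, ENNReal.ofReal (π s)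
                      * (K * ENNReal.ofReal (expWeight k (thA k η₀ B) s)) := by
                    rw [Finset.mul_sum, Finset.mul_sum]
                _ = ∑ B ∈ BS0, K * (ENNReal.ofReal (π s)
                      * ENNReal.ofReal (expWeight k (thA k η₀ B) s)) :=
                    Finset.sum_congr rfl fun B _ => by ring
                _ = K * ∑ B ∈ BS0, ENNReal.ofReal (π s)
                      * ENNReal.ofReal (expWeight k (thA k η₀ B) s) :=
                    (Finset.mul_sum _ _ _).symm
          _ = K * ∑' s : St k, ∑ B ∈ BS0, (ENNReal.ofReal (π s)
                * ENNReal.ofReal (expWeight k (thA k η₀ B) s)) := ENNReal.tsum_mul_left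
          _ = K * ∑ B ∈ BS0, ∑' s : St k, (ENNReal.ofReal (π s)
                * ENNReal.ofReal (expWeight k (thA k η₀ B) s)) := by
              rw [Summable.tsum_finsetSum (fun B _ => ENNReal.summable)]
          _ = K * C0 := rfl
    _ < ⊤ := ENNReal.mul_lt_top hKne.lt_top hC0fin
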